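/- If G is a connected chordal graph of order at least 2, then the set M = {v_i : i ≡ 0 (mod 3)} of vertices from a diametral path v_0,...,v_d is a multipacking of size at least ⌈(2·mp(G) − 1)/3⌉. -/

import Mathlib

open Finset

variable {V : Type*} [Fintype V] [DecidableEq V]

/-- The closed ball of radius `r` around `v` in the shortest-path metric of `G`. -/
noncomputable def gball (G : SimpleGraph V) (v : V) (r : ℕ) : Finset V :=
  Finset.univ.filter (fun u => G.dist v u ≤ r)

/-- `M` is a multipacking of `G` if every ball of radius `r ≥ 1` contains at most `r`
vertices of `M`. -/
def IsMultipacking (G : SimpleGraph V) (M : Finset V) : Prop :=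
  ∀ v : V, ∀ r : ℕ, 1 ≤ r → (M ∩ gball G v r).card ≤ r

/-- The multipacking number of `G`. -/
noncomputable def mp (G : SimpleGraph V) : ℕ :=
  sSup {n | ∃ M : Finset V, IsMultipacking G M ∧ M.card = n}

/-- Eccentricity of a vertex. -/
noncomputable def ecc (G : SimpleGraph V) (v : V) : ℕ :=
  Finset.univ.sup (fun u => G.dist v u)

/-- The diameter of `G`. -/
noncomputable def gdiam (G : SimpleGraph V) : ℕ :=
  Finset.univ.sup (fun p : V × V => G.dist p.1 p.2)

/-- The radius of `G`. -/
noncomputable def grad (G : SimpleGraph V) : ℕ :=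
  sInf {e | ∃ v : V, ecc G v = e}

/-- A dominating broadcast on `G`: a function `f : V → {0, …, diam G}` such that every
vertex hears a broadcast from some tower. -/
def IsDominatingBroadcast (G : SimpleGraph V) (f : V → ℕ) : Prop :=
  (∀ v : V, f v ≤ gdiam G) ∧ ∀ u : V, ∃ v : V, 0 < f v ∧ G.dist u v ≤ f v

/-- The broadcast domination number of `G`. -/
noncomputable def gammaB (G : SimpleGraph V) : ℕ :=
  sInf {c | ∃ f : V → ℕ, IsDominatingBroadcast G f ∧ ∑ v : V, f v = c}

/-- A graph is chordal if every cycle of length at least 4 has a chord, i.e. an edge of `G`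
joining two vertices of the cycle which is not an edge of the cycle. -/
def IsChordal (G : SimpleGraph V) : Prop :=
  ∀ ⦃v : V⦄ (c : G.Walk v v), c.IsCycle → 4 ≤ c.length →
    ∃ u w : V, u ∈ c.support ∧ w ∈ c.support ∧ G.Adj u w ∧ s(u, w) ∉ c.edges

/-- `G` is `δ`-hyperbolic: for any four vertices, the two larger of the three pairwise
distance sums differ by at most `2δ`. -/
def IsHyperbolic (G : SimpleGraph V) (δ : ℕ) : Prop :=
  ∀ u v w x : V,
    G.dist u v + G.dist w x ≤
      max (G.dist u w + G.dist v x) (G.dist u x + G.dist v w) + 2 * δ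

set_option linter.unusedSectionVars false

namespace ChordalAux

open SimpleGraph

variable {G : SimpleGraph V}

/-- Connectivity within a set `S`. -/
def Conn (G : SimpleGraph V) (S : Set V) (a b : V) : Prop :=
  ∃ q : G.Walk a b, ∀ x ∈ q.support, x ∈ S

lemma Conn.refl {S : Set V} {a : V} (ha : a ∈ S) : Conn G S a a := by
  refine ⟨.nil, ?_⟩; simp [ha]

lemma Conn.symm {S : Set V} {a b : V} (h : Conn G S a b) : Conn G S b a := by
  obtain ⟨q, hq⟩ := h
  exact ⟨q.reverse, by simpa [SimpleGraph.Walk.support_reverse] using hq⟩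

lemma Conn.trans {S : Set V} {a b c : V} (h1 : Conn G S a b) (h2 : Conn G S b c) :
    Conn G S a c := by
  obtain ⟨q1, hq1⟩ := h1
  obtain ⟨q2, hq2⟩ := h2
  refine ⟨q1.append q2, fun x hx => ?_⟩
  rw [SimpleGraph.Walk.mem_support_append_iff] at hx
  rcases hx with hx | hx
  · exact hq1 x hx
  · exact hq2 x hx

lemma Conn.mono {S T : Set V} (hST : S ⊆ T) {a b : V} (h : Conn G S a b) : Conn G T a b := by
  obtain ⟨q, hq⟩ := h; exact ⟨q, fun x hx => hST (hq x hx)⟩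

lemma Conn.left_mem {S : Set V} {a b : V} (h : Conn G S a b) : a ∈ S := by
  obtain ⟨q, hq⟩ := h; exact hq a q.start_mem_support

lemma Conn.right_mem {S : Set V} {a b : V} (h : Conn G S a b) : b ∈ S := by
  obtain ⟨q, hq⟩ := h; exact hq b q.end_mem_support

/-- Splitting a walk at a support vertex bounds distances. -/
lemma dist_split {u v z : V} (q : G.Walk u v) (hz : z ∈ q.support) :
    G.dist u z + G.dist z v ≤ q.length := by
  have hspec := q.take_spec hz
  have hlen : (q.takeUntil z hz).length + (q.dropUntil z hz).length = q.length := by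
    rw [← SimpleGraph.Walk.length_append, hspec]
  calc G.dist u z + G.dist z v ≤ (q.takeUntil z hz).length + (q.dropUntil z hz).length :=
        Nat.add_le_add (SimpleGraph.dist_le _) (SimpleGraph.dist_le _)
    _ = q.length := hlen

/-- A strictly shorter walk avoiding nothing new exists when there is a chord. -/
lemma shortcut {u v a b : V} (q : G.Walk u v) (ha : a ∈ q.support) (hb : b ∈ q.support)
    (hadj : G.Adj a b) (hne : s(a, b) ∉ q.edges) :
    ∃ q' : G.Walk u v, q'.length < q.length ∧ ∀ x ∈ q'.support, x ∈ q.support := by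
  induction q with
  | nil =>
    rw [SimpleGraph.Walk.mem_support_nil_iff] at ha hb
    subst ha; subst hb; exact absurd rfl hadj.ne
  | @cons u u' v huu' rest ih =>
    rw [SimpleGraph.Walk.support_cons, List.mem_cons] at ha hb
    by_cases hra : a ∈ rest.support <;> by_cases hrb : b ∈ rest.support
    · -- both in rest
      have hne' : s(a, b) ∉ rest.edges := fun h => hne (by
        rw [SimpleGraph.Walk.edges_cons]; exact List.mem_cons_of_mem _ h)
      obtain ⟨q', hq1, hq2⟩ := ih hra hrb hne'
      refine ⟨SimpleGraph.Walk.cons huu' q', ?_, fun x hx => ?_⟩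
      · simp only [SimpleGraph.Walk.length_cons]; omega
      · rw [SimpleGraph.Walk.support_cons, List.mem_cons] at hx ⊢
        exact hx.imp id (hq2 x)
    · -- a in rest, b = u
      have hbu : b = u := by tauto
      subst hbu
      have hbu' : a ≠ u' := by
        rintro rfl
        apply hne
        rw [SimpleGraph.Walk.edges_cons, Sym2.eq_swap]
        exact List.mem_cons_self
      -- new walk: b=u →(adj b a) a, then dropUntil a in rest
      obtain ⟨hlen, hsub⟩ : (rest.dropUntil a hra).length < rest.length ∧
          ∀ x ∈ (rest.dropUntil a hra).support, x ∈ rest.support := by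
        constructor
        · have hspec := rest.take_spec hra
          have hlen : (rest.takeUntil a hra).length + (rest.dropUntil a hra).length
              = rest.length := by rw [← SimpleGraph.Walk.length_append, hspec]
          have hpos : 0 < (rest.takeUntil a hra).length := by
            rcases Nat.eq_zero_or_pos (rest.takeUntil a hra).length with h0 | h
            · exact absurd (SimpleGraph.Walk.eq_of_length_eq_zero h0).symm hbu'
            · exact h
          omega
        · exact fun x hx => rest.support_dropUntil_subset hra hx
      refine ⟨SimpleGraph.Walk.cons hadj.symm (rest.dropUntil a hra), ?_, fun x hx => ?_⟩
      · simp only [SimpleGraph.Walk.length_cons]; omega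
      · rw [SimpleGraph.Walk.support_cons, List.mem_cons] at hx ⊢
        exact hx.imp id (fun h => hsub x h)
    · -- b in rest, a = u : symmetric, swap roles
      have hau : a = u := by tauto
      subst hau
      have hbu' : b ≠ u' := by
        rintro rfl
        exact hne (by rw [SimpleGraph.Walk.edges_cons]; exact List.mem_cons_self)
      obtain ⟨hlen, hsub⟩ : (rest.dropUntil b hrb).length < rest.length ∧
          ∀ x ∈ (rest.dropUntil b hrb).support, x ∈ rest.support := by
        constructor
        · have hspec := rest.take_spec hrb
          have hlen : (rest.takeUntil b hrb).length + (rest.dropUntil b hrb).length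
              = rest.length := by rw [← SimpleGraph.Walk.length_append, hspec]
          have hpos : 0 < (rest.takeUntil b hrb).length := by
            rcases Nat.eq_zero_or_pos (rest.takeUntil b hrb).length with h0 | h
            · exact absurd (SimpleGraph.Walk.eq_of_length_eq_zero h0).symm hbu'
            · exact h
          omega
        · exact fun x hx => rest.support_dropUntil_subset hrb hx
      refine ⟨SimpleGraph.Walk.cons hadj (rest.dropUntil b hrb), ?_, fun x hx => ?_⟩
      · simp only [SimpleGraph.Walk.length_cons]; omega
      · rw [SimpleGraph.Walk.support_cons, List.mem_cons] at hx ⊢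
        exact hx.imp id (fun h => hsub x h)
    · -- neither in rest: a = u and b = u
      have hau : a = u := by tauto
      have hbu : b = u := by tauto
      subst hau; subst hbu; exact absurd rfl hadj.ne

/-- Truncation at an interior vertex gives a strictly shorter walk. -/
lemma trunc {u v b : V} (q : G.Walk u v) (hb : b ∈ q.support) (hbv : b ≠ v) :
    ∃ q' : G.Walk u b, q'.length < q.length ∧ ∀ x ∈ q'.support, x ∈ q.support := by
  refine ⟨q.takeUntil b hb, ?_, fun x hx => q.support_takeUntil_subset hb hx⟩
  have hspec := q.take_spec hb
  have hlen : (q.takeUntil b hb).length + (q.dropUntil b hb).length = q.length := by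
    rw [← SimpleGraph.Walk.length_append, hspec]
  have hpos : 0 < (q.dropUntil b hb).length := by
    rcases Nat.eq_zero_or_pos (q.dropUntil b hb).length with h0 | h; swap
    · exact h
    · exact absurd (SimpleGraph.Walk.eq_of_length_eq_zero h0) hbv
  omega

/-- Key chordal lemma: if a clique `S` is attached to a connected set `C`, some vertex of `C`
is adjacent to all of `S`. -/
lemma clique_attach (hch : IsChordal G) :
    ∀ n (C S : Set V), C.ncard = n → C.Nonempty →
    (∀ x ∈ C, ∀ y ∈ C, Conn G C x y) →
    (∀ s ∈ S, s ∉ C) →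
    (∀ s ∈ S, ∀ s' ∈ S, s ≠ s' → G.Adj s s') →
    (∀ s ∈ S, ∃ c ∈ C, G.Adj s c) →
    ∃ t ∈ C, ∀ s ∈ S, G.Adj s t := by
  intro n
  induction n using Nat.strong_induction_on with
  | _ n ih =>
  intro C S hn hCne hconn hdisj hclique hnbr
  classical
  obtain ⟨c0, hc0⟩ := hCne
  rcases Set.eq_empty_or_nonempty S with hSe | hSne
  · exact ⟨c0, hc0, by simp [hSe]⟩
  set ℓ : V → ℕ := fun x => sInf {m | ∃ q : G.Walk x c0, (∀ z ∈ q.support, z ∈ C) ∧ q.length = m}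
    with hℓ
  have hℓne : ∀ x ∈ C, {m | ∃ q : G.Walk x c0, (∀ z ∈ q.support, z ∈ C) ∧ q.length = m}.Nonempty := by
    intro x hx
    obtain ⟨q, hq⟩ := hconn x hx c0 hc0
    exact ⟨q.length, q, hq, rfl⟩
  have hℓwalk : ∀ x ∈ C, ∃ q : G.Walk x c0, (∀ z ∈ q.support, z ∈ C) ∧ q.length = ℓ x := by
    intro x hx
    exact Nat.sInf_mem (hℓne x hx)
  have hℓle : ∀ (x : V) (q : G.Walk x c0), (∀ z ∈ q.support, z ∈ C) → ℓ x ≤ q.length := by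
    intro x q hq
    exact Nat.sInf_le ⟨q, hq, rfl⟩
  have hℓzero : ℓ c0 = 0 := by
    have := hℓle c0 SimpleGraph.Walk.nil (by simp [hc0])
    simpa using this
  have hCfin : C.Finite := Set.toFinite C
  obtain ⟨c, hcF, hcmax⟩ :=
    hCfin.toFinset.exists_max_image ℓ ⟨c0, hCfin.mem_toFinset.mpr hc0⟩
  rw [Set.Finite.mem_toFinset] at hcF
  have hcmax' : ∀ x ∈ C, ℓ x ≤ ℓ c := fun x hx => hcmax x (hCfin.mem_toFinset.mpr hx)
  by_cases hbr : ∀ s ∈ S, ∃ c' ∈ C, c' ≠ c ∧ G.Adj s c'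
  · -- branch 1: recurse on C \ {c}
    set C' := C \ {c} with hC'
    obtain ⟨s1, hs1⟩ := hSne
    obtain ⟨c1, hc1C, hc1ne, _⟩ := hbr s1 hs1
    have hC'ne : C'.Nonempty := ⟨c1, hc1C, hc1ne⟩
    have hcc0 : c ≠ c0 := by
      rintro rfl
      obtain ⟨q, hqsup, hqlen⟩ := hℓwalk c1 hc1C
      have : ℓ c1 = 0 := le_antisymm (hℓzero ▸ hcmax' c1 hc1C) (Nat.zero_le _)
      rw [this] at hqlen
      exact hc1ne (SimpleGraph.Walk.eq_of_length_eq_zero hqlen)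
    have havoid : ∀ x ∈ C', Conn G C' x c0 := by
      intro x hx
      obtain ⟨hxC, hxc⟩ := hx
      have hxc : x ≠ c := hxc
      obtain ⟨q, hqsup, hqlen⟩ := hℓwalk x hxC
      have hcnot : c ∉ q.support := by
        intro hcq
        have hspec := q.take_spec hcq
        have hladd : (q.takeUntil c hcq).length + (q.dropUntil c hcq).length = q.length := by
          rw [← SimpleGraph.Walk.length_append, hspec]
        have h2 : ℓ c ≤ (q.dropUntil c hcq).length :=
          hℓle c _ (fun z hz => hqsup z (q.support_dropUntil_subset hcq hz))
        have h1 : 0 < (q.takeUntil c hcq).length := by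
          rcases Nat.eq_zero_or_pos (q.takeUntil c hcq).length with h0 | h
          · exact absurd (SimpleGraph.Walk.eq_of_length_eq_zero h0) hxc
          · exact h
        have := hcmax' x hxC
        omega
      exact ⟨q, fun z hz => ⟨hqsup z hz, fun hzc => hcnot (hzc ▸ hz)⟩⟩
    have hc0' : c0 ∈ C' := ⟨hc0, fun h => hcc0 (h : c0 = c).symm⟩
    have hconn' : ∀ x ∈ C', ∀ y ∈ C', Conn G C' x y := by
      intro x hx y hy
      exact (havoid x hx).trans (havoid y hy).symm
    have hlt : C'.ncard < n := by
      rw [← hn]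
      exact Set.ncard_lt_ncard (Set.sdiff_singleton_ssubset.mpr hcF) hCfin
    obtain ⟨t, htC', ht⟩ := ih C'.ncard hlt C' S rfl hC'ne hconn'
      (fun s hs hsC' => hdisj s hs hsC'.1) hclique
      (fun s hs => by
        obtain ⟨c', hc'C, hc'ne, hadj⟩ := hbr s hs
        exact ⟨c', ⟨hc'C, hc'ne⟩, hadj⟩)
    exact ⟨t, htC'.1, ht⟩
  · -- branch 2: some s* has only c as neighbour in C
    push_neg at hbr
    obtain ⟨sstar, hsstarS, hsstar⟩ := hbr
    have hsstaronly : ∀ c' ∈ C, G.Adj sstar c' → c' = c := by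
      intro c' hc' hadj
      by_contra hne
      exact (hsstar c' hc' hne) hadj
    have hsstarc : G.Adj sstar c := by
      obtain ⟨c'', hc''C, hadj⟩ := hnbr sstar hsstarS
      have := hsstaronly c'' hc''C hadj
      rwa [this] at hadj
    refine ⟨c, hcF, ?_⟩
    intro s' hs'
    by_contra hs'c
    have hss' : s' ≠ sstar := fun h => hs'c (h ▸ hsstarc)
    have hadjss : G.Adj s' sstar := hclique s' hs' sstar hsstarS hss'
    obtain ⟨pk0, hpk0C, hpk0adj⟩ := hnbr s' hs'
    set L := {m | ∃ pk, (pk ∈ C ∧ G.Adj s' pk) ∧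
      ∃ q : G.Walk c pk, (∀ z ∈ q.support, z ∈ C) ∧ q.length = m} with hL
    have hLne : L.Nonempty := by
      obtain ⟨q, hq⟩ := hconn c hcF pk0 hpk0C
      exact ⟨q.length, pk0, ⟨hpk0C, hpk0adj⟩, q, hq, rfl⟩
    set k := sInf L with hk
    obtain ⟨pk, ⟨hpkC, hpkadj⟩, q0, hq0sup, hq0len⟩ := Nat.sInf_mem hLne
    rw [← hk] at hq0len
    have hmin : ∀ (pk' : V), pk' ∈ C → G.Adj s' pk' → ∀ (q' : G.Walk c pk'),
        (∀ z ∈ q'.support, z ∈ C) → k ≤ q'.length := by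
      intro pk' h1 h2 q' h3
      exact Nat.sInf_le ⟨pk', ⟨h1, h2⟩, q', h3, rfl⟩
    set q := q0.bypass with hqdef
    have hqpath : q.IsPath := q0.bypass_isPath
    have hqsup : ∀ z ∈ q.support, z ∈ C := fun z hz => hq0sup z (q0.support_bypass_subset hz)
    have hqlen : q.length = k := by
      refine le_antisymm ?_ (hmin pk hpkC hpkadj q hqsup)
      rw [← hq0len]
      exact q0.length_bypass_le
    have hk1 : 1 ≤ k := by
      rcases Nat.eq_zero_or_pos k with h0 | h
      · rw [h0] at hqlen
        have := SimpleGraph.Walk.eq_of_length_eq_zero hqlen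
        rw [← this] at hpkadj
        exact absurd hpkadj hs'c
      · exact h
    have hQ2 : ∀ a b, a ∈ q.support → b ∈ q.support → G.Adj a b → s(a, b) ∈ q.edges := by
      intro a b ha hb hab
      by_contra hne
      obtain ⟨q', hq'len, hq'sup⟩ := shortcut q ha hb hab hne
      have := hmin pk hpkC hpkadj q' (fun z hz => hqsup z (hq'sup z hz))
      omega
    have hQ3 : ∀ a ∈ q.support, G.Adj s' a → a = pk := by
      intro a ha hadj
      by_contra hapk
      obtain ⟨q', hq'len, hq'sup⟩ := trunc q ha hapk
      have := hmin a (hqsup a ha) hadj q' (fun z hz => hqsup z (hq'sup z hz))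
      omega
    have hQ4 : ∀ a ∈ q.support, G.Adj sstar a → a = c :=
      fun a ha hadj => hsstaronly a (hqsup a ha) hadj
    -- build the cycle
    set inner : G.Walk c sstar :=
      q.append (SimpleGraph.Walk.cons hpkadj.symm
        (SimpleGraph.Walk.cons hadjss SimpleGraph.Walk.nil)) with hinner
    set cyc : G.Walk sstar sstar := SimpleGraph.Walk.cons hsstarc inner with hcyc
    have hinnersup : inner.support = q.support ++ [s', sstar] := by
      rw [hinner, SimpleGraph.Walk.support_append]
      simp
    have hinneredges : inner.edges = q.edges ++ [s(pk, s'), s(s', sstar)] := by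
      rw [hinner, SimpleGraph.Walk.edges_append]
      simp
    have hsstarC : sstar ∉ C := hdisj sstar hsstarS
    have hs'C : s' ∉ C := hdisj s' hs'
    have hcycle : cyc.IsCycle := by
      rw [hcyc, SimpleGraph.Walk.cons_isCycle_iff]
      constructor
      · rw [SimpleGraph.Walk.isPath_def, hinnersup]
        rw [List.nodup_append]
        refine ⟨hqpath.support_nodup, by simp [hss'], ?_⟩
        intro z hz w hz2 hzw
        subst hzw
        simp only [List.mem_cons, List.mem_singleton, List.not_mem_nil, or_false] at hz2
        rcases hz2 with rfl | rfl
        · exact hs'C (hqsup z hz)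
        · exact hsstarC (hqsup z hz)
      · rw [hinneredges]
        intro hmem
        rw [List.mem_append] at hmem
        rcases hmem with hmem | hmem
        · exact hsstarC (hqsup sstar (q.fst_mem_support_of_mem_edges hmem))
        · simp only [List.mem_cons, List.mem_singleton, List.not_mem_nil, or_false] at hmem
          rcases hmem with hmem | hmem
          · rw [Sym2.eq_iff] at hmem
            rcases hmem with ⟨h1, h2⟩ | ⟨h1, h2⟩
            · exact hsstarC (h1 ▸ hpkC)
            · exact hss' h1.symm
          · rw [Sym2.eq_iff] at hmem
            rcases hmem with ⟨h1, h2⟩ | ⟨h1, h2⟩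
            · exact hss' h1.symm
            · exact hs'C (h2 ▸ hcF)
    have hlen4 : 4 ≤ cyc.length := by
      rw [hcyc, SimpleGraph.Walk.length_cons, hinner, SimpleGraph.Walk.length_append]
      simp only [SimpleGraph.Walk.length_cons, SimpleGraph.Walk.length_nil]
      omega
    obtain ⟨a, b, haS, hbS, hab, hnotE⟩ := hch cyc hcycle hlen4
    have hmem : ∀ z ∈ cyc.support, z = sstar ∨ z = s' ∨ z ∈ q.support := by
      intro z hz
      rw [hcyc, SimpleGraph.Walk.support_cons, List.mem_cons] at hz
      rcases hz with rfl | hz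
      · exact Or.inl rfl
      · rw [hinnersup, List.mem_append] at hz
        rcases hz with hz | hz
        · exact Or.inr (Or.inr hz)
        · simp only [List.mem_cons, List.mem_singleton, List.not_mem_nil, or_false] at hz
          rcases hz with rfl | rfl
          · exact Or.inr (Or.inl rfl)
          · exact Or.inl rfl
    have hcycE : cyc.edges = s(sstar, c) :: (q.edges ++ [s(pk, s'), s(s', sstar)]) := by
      rw [hcyc, SimpleGraph.Walk.edges_cons, hinneredges]
    apply hnotE
    rw [hcycE]
    have key : ∀ z w : V, (z = sstar ∨ z = s' ∨ z ∈ q.support) →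
        (w = sstar ∨ w = s' ∨ w ∈ q.support) → G.Adj z w →
        s(z, w) ∈ s(sstar, c) :: (q.edges ++ [s(pk, s'), s(s', sstar)]) := by
      intro z w hzm hwm hzw
      rcases hzm with rfl | rfl | hzq
      · rcases hwm with rfl | rfl | hwq
        · exact absurd rfl hzw.ne
        · rw [Sym2.eq_swap]
          simp
        · have := hQ4 w hwq hzw
          subst this
          simp
      · rcases hwm with rfl | rfl | hwq
        · simp
        · exact absurd rfl hzw.ne
        · have := hQ3 w hwq hzw
          subst this
          rw [Sym2.eq_swap]
          simp
      · rcases hwm with rfl | rfl | hwq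
        · have := hQ4 z hzq hzw.symm
          subst this
          rw [Sym2.eq_swap]
          simp
        · have := hQ3 z hzq hzw.symm
          subst this
          simp
        · have := hQ2 z w hzq hwq hzw
          simp [this]
    exact key a b (hmem a haS) (hmem b hbS) hab

/-- Main induction for the chordal radius theorem. -/
lemma main_induction (hG : G.Connected) (hch : IsChordal G) (b h : ℕ)
    (hd : ∀ u v : V, G.dist u v ≤ b + h) (hh : h ≤ b + 1) :
    ∀ N (W A : Set V), (Fintype.card V + 1) * W.ncard + (W \ A).ncard ≤ N →
    A.Nonempty → A ⊆ W →
    (∀ a ∈ A, ∀ a' ∈ A, a ≠ a' → G.Adj a a') →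
    (∀ x ∈ W, x ∉ A → ∀ y, G.Adj x y → y ∈ W) →
    (∀ x ∈ W, ∀ y ∈ W, Conn G W x y) →
    (∀ u, u ∉ W → ∃ a ∈ A, ∃ w ∈ W, G.dist u a + h ≤ G.dist u w) →
    ∃ K : Set V, K ⊆ W ∧ K.Nonempty ∧ (∀ a ∈ K, ∀ a' ∈ K, a ≠ a' → G.Adj a a') ∧
      ∀ u, ∃ k ∈ K, (G.dist u k ≤ b ∨ ∃ w ∈ W, G.dist u k + h ≤ G.dist u w) := by
  intro N
  induction N with
  | zero =>
    intro W A hm hAne hAW _ _ _ _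
    exfalso
    have h0 : (Fintype.card V + 1) * W.ncard = 0 := by omega
    have hW0 : W.ncard = 0 := by
      rcases Nat.mul_eq_zero.mp h0 with h | h
      · omega
      · exact h
    have hWe : W = ∅ := (Set.ncard_eq_zero (Set.toFinite W)).mp hW0
    obtain ⟨a, ha⟩ := hAne
    rw [hWe] at hAW
    exact hAW ha
  | succ N ihN =>
    intro W A hm hAne hAW hAclique hsep hconn hI3
    classical
    by_cases hgood : ∀ w ∈ W, ∃ a ∈ A, G.dist w a ≤ b
    · refine ⟨A, hAW, hAne, hAclique, fun u => ?_⟩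
      by_cases huW : u ∈ W
      · obtain ⟨a, haA, hab⟩ := hgood u huW
        exact ⟨a, haA, Or.inl hab⟩
      · obtain ⟨a, haA, w, hwW, hle⟩ := hI3 u huW
        exact ⟨a, haA, Or.inr ⟨w, hwW, hle⟩⟩
    · push_neg at hgood
      obtain ⟨w0, hw0W, hw0far⟩ := hgood
      have hw0far' : ∀ a ∈ A, b + 1 ≤ G.dist w0 a := by
        intro a ha
        have := hw0far a ha
        omega
      have hw0A : w0 ∉ A := by
        intro hmem
        have := hw0far' w0 hmem
        rw [SimpleGraph.dist_self] at this
        omega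
      set C := {x | x ∈ W ∧ x ∉ A ∧ Conn G (W \ A) x w0} with hC
      have hCW : ∀ x ∈ C, x ∈ W := fun x hx => hx.1
      have hCA : ∀ x ∈ C, x ∉ A := fun x hx => hx.2.1
      have hw0C : w0 ∈ C := ⟨hw0W, hw0A, Conn.refl ⟨hw0W, hw0A⟩⟩
      have hCclosed : ∀ x ∈ C, ∀ y, G.Adj x y → y ∈ W → y ∉ A → y ∈ C := by
        intro x hx y hadj hyW hyA
        refine ⟨hyW, hyA, Conn.trans ?_ hx.2.2⟩
        refine ⟨SimpleGraph.Walk.cons hadj.symm SimpleGraph.Walk.nil, ?_⟩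
        intro z hz
        simp only [SimpleGraph.Walk.support_cons, SimpleGraph.Walk.support_nil,
          List.mem_cons, List.mem_singleton, List.not_mem_nil, or_false] at hz
        rcases hz with rfl | rfl
        · exact ⟨hyW, hyA⟩
        · exact ⟨hx.1, hx.2.1⟩
      have hsupC : ∀ (x : V) (q : G.Walk x w0), (∀ z ∈ q.support, z ∈ W \ A) →
          ∀ z ∈ q.support, z ∈ C := by
        intro x q hq z hz
        exact ⟨(hq z hz).1, (hq z hz).2,
          ⟨q.dropUntil z hz, fun y hy => hq y (q.support_dropUntil_subset hz hy)⟩⟩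
      have hConnC : ∀ x ∈ C, Conn G C x w0 := by
        intro x hx
        obtain ⟨q, hq⟩ := hx.2.2
        exact ⟨q, fun z hz => hsupC x q hq z hz⟩
      set S := {a | a ∈ A ∧ ∃ c' ∈ C, G.Adj a c'} with hS
      have hSA : ∀ s ∈ S, s ∈ A := fun s hs => hs.1
      have henter : ∀ (u'' v'' : V) (q : G.Walk u'' v''), v'' ∈ C → u'' ∉ C →
          ∃ s ∈ S, G.dist u'' s + G.dist s v'' ≤ q.length := by
        intro u'' v'' q
        induction q with
        | nil =>
          intro hv hu
          exact absurd hv hu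
        | @cons a m v2 hadj rest ih =>
          intro hv hu
          by_cases hmC : m ∈ C
          · have haW : a ∈ W := hsep m (hCW m hmC) (hCA m hmC) a hadj.symm
            have haA : a ∈ A := by
              by_contra haA
              exact hu (hCclosed m hmC a hadj.symm haW haA)
            have haS : a ∈ S := ⟨haA, m, hmC, hadj⟩
            refine ⟨a, haS, ?_⟩
            rw [SimpleGraph.dist_self]
            have := SimpleGraph.dist_le (SimpleGraph.Walk.cons hadj rest)
            omega
          · obtain ⟨s, hsS, hsle⟩ := ih hv hmC
            refine ⟨s, hsS, ?_⟩
            have htri := hG.dist_triangle (u := a) (v := m) (w := s)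
            have h1 : G.dist a m ≤ 1 := (SimpleGraph.dist_eq_one_iff_adj.mpr hadj).le
            rw [SimpleGraph.Walk.length_cons]
            omega
      obtain ⟨t, htC, ht⟩ := clique_attach hch C.ncard C S rfl ⟨w0, hw0C⟩
        (fun x hx y hy => (hConnC x hx).trans (hConnC y hy).symm)
        (fun s hs hsC => (hCA s hsC) (hSA s hs))
        (fun s hs s' hs' hne => hAclique s (hSA s hs) s' (hSA s' hs') hne)
        (fun s hs => hs.2)
      set W' := C ∪ S with hW'
      set A' := S ∪ {t} with hA'
      have hW'W : W' ⊆ W := by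
        intro x hx
        rcases hx with hx | hx
        · exact hCW x hx
        · exact hAW (hSA x hx)
      have htW' : t ∈ W' := Or.inl htC
      have hA'W' : A' ⊆ W' := by
        intro x hx
        rcases hx with hx | hx
        · exact Or.inr hx
        · rw [hx]; exact htW'
      have hA'ne : A'.Nonempty := ⟨t, Or.inr rfl⟩
      have hA'clique : ∀ x ∈ A', ∀ x' ∈ A', x ≠ x' → G.Adj x x' := by
        intro x hx x' hx' hne
        rcases hx with hx | hx <;> rcases hx' with hx' | hx'
        · exact hAclique x (hSA x hx) x' (hSA x' hx') hne
        · rw [hx']; exact ht x hx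
        · rw [hx]; exact (ht x' hx').symm
        · rw [hx, hx'] at hne; exact absurd rfl hne
      have hsep' : ∀ x ∈ W', x ∉ A' → ∀ y, G.Adj x y → y ∈ W' := by
        intro x hx hxA' y hadj
        have hxC : x ∈ C := by
          rcases hx with hx | hx
          · exact hx
          · exact absurd (Or.inl hx) hxA'
        have hyW : y ∈ W := hsep x (hCW x hxC) (hCA x hxC) y hadj
        by_cases hyA : y ∈ A
        · exact Or.inr ⟨hyA, x, hxC, hadj.symm⟩
        · exact Or.inl (hCclosed x hxC y hadj hyW hyA)
      have hW'w0 : ∀ x ∈ W', Conn G W' x w0 := by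
        intro x hx
        rcases hx with hx | hx
        · exact (hConnC x hx).mono Set.subset_union_left
        · obtain ⟨c', hc'C, hadj⟩ := hx.2
          refine Conn.trans ?_ ((hConnC c' hc'C).mono Set.subset_union_left)
          refine ⟨SimpleGraph.Walk.cons hadj SimpleGraph.Walk.nil, ?_⟩
          intro z hz
          simp only [SimpleGraph.Walk.support_cons, SimpleGraph.Walk.support_nil,
            List.mem_cons, List.mem_singleton, List.not_mem_nil, or_false] at hz
          rcases hz with rfl | rfl
          · exact Or.inr hx
          · exact Or.inl hc'C
      have hconn' : ∀ x ∈ W', ∀ y ∈ W', Conn G W' x y :=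
        fun x hx y hy => (hW'w0 x hx).trans (hW'w0 y hy).symm
      have hI3' : ∀ u, u ∉ W' → ∃ a ∈ A', ∃ w ∈ W', G.dist u a + h ≤ G.dist u w := by
        intro u huW'
        have huC : u ∉ C := fun hu => huW' (Or.inl hu)
        obtain ⟨qd, hqd⟩ := ((hG u w0) : G.Reachable u w0).exists_walk_length_eq_dist
        obtain ⟨s, hsS, hsle⟩ := henter u w0 qd hw0C huC
        rw [hqd] at hsle
        have hsw0 : b + 1 ≤ G.dist s w0 := by
          have := hw0far' s (hSA s hsS)
          have hcomm : G.dist s w0 = G.dist w0 s := SimpleGraph.dist_comm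
          omega
        exact ⟨s, Or.inl hsS, w0, Or.inl hw0C, by omega⟩
      have hmeas : (Fintype.card V + 1) * W'.ncard + (W' \ A').ncard ≤ N := by
        have hsubWA : W' \ A' ⊆ (W \ A) \ {t} := by
          intro x hx
          obtain ⟨hx1, hx2⟩ := hx
          have hxC : x ∈ C := by
            rcases hx1 with h1 | h1
            · exact h1
            · exact absurd (Or.inl h1) hx2
          exact ⟨⟨hCW x hxC, hCA x hxC⟩, fun hxt => hx2 (Or.inr hxt)⟩
        have htWA : t ∈ W \ A := ⟨hCW t htC, hCA t htC⟩
        have hlt2 : (W' \ A').ncard < (W \ A).ncard := by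
          apply Set.ncard_lt_ncard _ (Set.toFinite _)
          constructor
          · exact hsubWA.trans Set.diff_subset
          · intro hcon
            have := hcon htWA
            exact (hsubWA this).2 rfl
        by_cases hWW : W'.ncard = W.ncard
        · rw [hWW]
          omega
        · have hlt1 : W'.ncard < W.ncard :=
            lt_of_le_of_ne (Set.ncard_le_ncard hW'W (Set.toFinite W)) hWW
          have hbound : (W' \ A').ncard ≤ Fintype.card V := by
            have := Set.ncard_le_ncard (Set.subset_univ (W' \ A')) (Set.toFinite _)
            rwa [Set.ncard_univ, Nat.card_eq_fintype_card] at this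
          have hchain : (Fintype.card V + 1) * W'.ncard + (W' \ A').ncard < N + 1 :=
            calc (Fintype.card V + 1) * W'.ncard + (W' \ A').ncard
                ≤ (Fintype.card V + 1) * W'.ncard + Fintype.card V := by omega
              _ < (Fintype.card V + 1) * (W'.ncard + 1) := by ring_nf; omega
              _ ≤ (Fintype.card V + 1) * W.ncard := Nat.mul_le_mul_left _ (by omega)
              _ ≤ N + 1 := by omega
          omega
      obtain ⟨K, hKW', hKne, hKclique, hKcov⟩ :=
        ihN W' A' hmeas hA'ne hA'W' hA'clique hsep' hconn' hI3'
      refine ⟨K, hKW'.trans hW'W, hKne, hKclique, fun u => ?_⟩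
      obtain ⟨k, hk, hcase⟩ := hKcov u
      rcases hcase with h1 | ⟨w, hwW', hle⟩
      · exact ⟨k, hk, Or.inl h1⟩
      · exact ⟨k, hk, Or.inr ⟨w, hW'W hwW', hle⟩⟩

/-- Chordal radius theorem: some vertex is within `⌊d/2⌋ + 1` of every vertex. -/
lemma radius_bound (hG : G.Connected) (hch : IsChordal G) :
    ∃ c : V, ∀ u : V, G.dist c u ≤ gdiam G / 2 + 1 := by
  classical
  have hne : Nonempty V := hG.nonempty
  set d := gdiam G with hd
  set b := d / 2 with hb
  set h := d - d / 2 with hh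
  have hdle : ∀ u v : V, G.dist u v ≤ b + h := by
    intro u v
    have : G.dist u v ≤ d :=
      Finset.le_sup (f := fun pr : V × V => G.dist pr.1 pr.2) (Finset.mem_univ (u, v))
    omega
  have hh1 : h ≤ b + 1 := by omega
  obtain ⟨v0⟩ := hne
  obtain ⟨K, hKW, ⟨k0, hk0⟩, hKclique, hcov⟩ :=
    main_induction hG hch b h hdle hh1
      ((Fintype.card V + 1) * (Set.univ : Set V).ncard + ((Set.univ \ {v0} : Set V)).ncard)
      Set.univ {v0} le_rfl ⟨v0, rfl⟩ (Set.subset_univ _)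
      (by rintro a rfl a' rfl hne'; exact absurd rfl hne')
      (by intro x _ _ y _; trivial)
      (by intro x _ y _; exact ⟨((hG x y) : G.Reachable x y).some, fun z _ => trivial⟩)
      (by intro u hu; exact absurd (Set.mem_univ u) hu)
  refine ⟨k0, fun u => ?_⟩
  obtain ⟨k, hk, hcase⟩ := hcov u
  have hub : G.dist u k ≤ b := by
    rcases hcase with h1 | ⟨w, _, h2⟩
    · exact h1
    · have := hdle u w
      omega
  have hck : G.dist k0 k ≤ 1 := by
    rcases eq_or_ne k0 k with rfl | hne'
    · rw [SimpleGraph.dist_self]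
      omega
    · exact le_of_eq (SimpleGraph.dist_eq_one_iff_adj.mpr (hKclique k0 hk0 k hk hne'))
  have htri := hG.dist_triangle (u := k0) (v := k) (w := u)
  have hcomm : G.dist k u = G.dist u k := SimpleGraph.dist_comm
  omega

end ChordalAux

section PartA

open SimpleGraph ChordalAux

variable {G : SimpleGraph V}

lemma dist_start_getVert (hG : G.Connected) {x y : V} (p : G.Walk x y) (i : ℕ) :
    G.dist x (p.getVert i) ≤ i := by
  induction i with
  | zero => simp [SimpleGraph.Walk.getVert_zero]
  | succ i ih =>
    by_cases hi : i < p.length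
    · have hadj := p.adj_getVert_succ hi
      have h1 : G.dist (p.getVert i) (p.getVert (i + 1)) ≤ 1 :=
        (SimpleGraph.dist_eq_one_iff_adj.mpr hadj).le
      have := hG.dist_triangle (u := x) (v := p.getVert i) (w := p.getVert (i + 1))
      omega
    · push_neg at hi
      have h1 : p.getVert (i + 1) = y := p.getVert_of_length_le (by omega)
      have h2 : p.getVert i = y := p.getVert_of_length_le hi
      rw [h1, ← h2]
      omega

lemma dist_getVert_end (hG : G.Connected) {x y : V} (p : G.Walk x y) {i : ℕ}
    (hi : i ≤ p.length) : G.dist (p.getVert i) y ≤ p.length - i := by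
  have h1 := dist_start_getVert hG p.reverse (p.length - i)
  rw [SimpleGraph.Walk.getVert_reverse, Nat.sub_sub_self hi] at h1
  rw [SimpleGraph.dist_comm]
  exact h1

lemma getVert_dist_lower (hG : G.Connected) {x y : V} (p : G.Walk x y)
    (hshort : p.length = G.dist x y) {i j : ℕ} (hij : i ≤ j) (hj : j ≤ p.length) :
    j - i ≤ G.dist (p.getVert i) (p.getVert j) := by
  have h1 := dist_start_getVert hG p i
  have h2 := dist_getVert_end hG p hj
  have t1 := hG.dist_triangle (u := x) (v := p.getVert i) (w := y)
  have t2 := hG.dist_triangle (u := p.getVert i) (v := p.getVert j) (w := y)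
  omega

lemma getVert_injOn (hG : G.Connected) {x y : V} (p : G.Walk x y)
    (hshort : p.length = G.dist x y) :
    ∀ i ≤ p.length, ∀ j ≤ p.length, p.getVert i = p.getVert j → i = j := by
  intro i hi j hj heq
  rcases le_total i j with hij | hij
  · have := getVert_dist_lower hG p hshort hij hj
    rw [heq, SimpleGraph.dist_self] at this
    omega
  · have := getVert_dist_lower hG p hshort hij hi
    rw [← heq, SimpleGraph.dist_self] at this
    omega

end PartA

/-- For a connected chordal graph of order at least 2, every third vertex of a diametral path
forms a multipacking of size at least `⌈(2·mp(G) − 1)/3⌉`. -/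
theorem chordal_approx_multipacking (G : SimpleGraph V) (hG : G.Connected)
    (hchordal : IsChordal G) (hcard : 2 ≤ Fintype.card V)
    {x y : V} (p : G.Walk x y) (hpath : p.IsPath)
    (hshortest : p.length = G.dist x y) (hdiam : p.length = gdiam G) :
    IsMultipacking G
        (((Finset.range (p.length + 1)).filter (fun i => i % 3 = 0)).image p.getVert) ∧
      (2 * mp G + 1) / 3 ≤
        (((Finset.range (p.length + 1)).filter (fun i => i % 3 = 0)).image p.getVert).card := by
  classical
  set I0 := (Finset.range (p.length + 1)).filter (fun i => i % 3 = 0) with hI0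
  set M := I0.image p.getVert with hM
  have hI0mem : ∀ i ∈ I0, i ≤ p.length ∧ i % 3 = 0 := by
    intro i hi
    rw [hI0, Finset.mem_filter, Finset.mem_range] at hi
    omega
  constructor
  · -- multipacking
    intro v r hr
    set I := I0.filter (fun i => G.dist v (p.getVert i) ≤ r) with hI
    have hsub : M ∩ gball G v r ⊆ I.image p.getVert := by
      intro z hz
      rw [Finset.mem_inter] at hz
      obtain ⟨hz1, hz2⟩ := hz
      rw [hM, Finset.mem_image] at hz1
      obtain ⟨i, hi, rfl⟩ := hz1
      rw [gball, Finset.mem_filter] at hz2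
      refine Finset.mem_image_of_mem _ ?_
      rw [hI, Finset.mem_filter]
      exact ⟨hi, hz2.2⟩
    have hcardI : I.card ≤ r := by
      rcases Finset.eq_empty_or_nonempty I with he | hne
      · rw [he]; simp
      · set imin := I.min' hne with him
        set imax := I.max' hne with hjm
        have hminI : imin ∈ I := I.min'_mem hne
        have hmaxI : imax ∈ I := I.max'_mem hne
        have hle : imin ≤ imax := I.min'_le _ hmaxI
        have h1 := hI0mem imin (Finset.mem_filter.mp hminI).1
        have h2 := hI0mem imax (Finset.mem_filter.mp hmaxI).1
        have hd1 : G.dist v (p.getVert imin) ≤ r := (Finset.mem_filter.mp hminI).2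
        have hd2 : G.dist v (p.getVert imax) ≤ r := (Finset.mem_filter.mp hmaxI).2
        have dlow : imax - imin ≤ G.dist (p.getVert imin) (p.getVert imax) :=
          getVert_dist_lower hG p hshortest hle h2.1
        have dup : G.dist (p.getVert imin) (p.getVert imax) ≤ 2 * r := by
          have := hG.dist_triangle (u := p.getVert imin) (v := v) (w := p.getVert imax)
          have hcomm : G.dist (p.getVert imin) v = G.dist v (p.getVert imin) :=
            SimpleGraph.dist_comm
          omega
        have hinj : Set.InjOn (· / 3) ↑I := by
          intro i hi j hj hij
          rw [Finset.mem_coe, Finset.mem_filter] at hi hj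
          have h1 := hI0mem i hi.1
          have h2 := hI0mem j hj.1
          have h3 : i / 3 = j / 3 := hij
          omega
        have hcard1 : I.card = (I.image (· / 3)).card := (Finset.card_image_of_injOn hinj).symm
        have hsub2 : I.image (· / 3) ⊆ Finset.Icc (imin / 3) (imax / 3) := by
          intro j hj
          rw [Finset.mem_image] at hj
          obtain ⟨i, hi, rfl⟩ := hj
          rw [Finset.mem_Icc]
          exact ⟨Nat.div_le_div_right (I.min'_le _ hi), Nat.div_le_div_right (I.le_max' _ hi)⟩
        have hcard2 : (I.image (· / 3)).card ≤ imax / 3 + 1 - imin / 3 := by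
          have := Finset.card_le_card hsub2
          rwa [Nat.card_Icc] at this
        omega
    calc (M ∩ gball G v r).card ≤ (I.image p.getVert).card := Finset.card_le_card hsub
      _ ≤ I.card := Finset.card_image_le
      _ ≤ r := hcardI
  · -- size bound
    have hdle : ∀ u v : V, G.dist u v ≤ gdiam G := by
      intro u v
      exact Finset.le_sup (f := fun pr : V × V => G.dist pr.1 pr.2) (Finset.mem_univ (u, v))
    have hcardM : M.card = p.length / 3 + 1 := by
      have hinj : Set.InjOn p.getVert ↑I0 := by
        intro i hi j hj hij
        simp only [Finset.mem_coe] at hi hj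
        exact getVert_injOn hG p hshortest i (hI0mem i hi).1 j (hI0mem j hj).1 hij
      rw [hM, Finset.card_image_of_injOn hinj]
      have : I0 = (Finset.range (p.length / 3 + 1)).image (fun k => 3 * k) := by
        ext i
        rw [hI0, Finset.mem_filter, Finset.mem_range, Finset.mem_image]
        constructor
        · rintro ⟨h1, h2⟩
          exact ⟨i / 3, by simp only [Finset.mem_range]; omega, by omega⟩
        · rintro ⟨k, hk, rfl⟩
          rw [Finset.mem_range] at hk
          omega
      rw [this, Finset.card_image_of_injOn (by intro a _ b _ h; have h' : 3 * a = 3 * b := h; omega), Finset.card_range]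
    obtain ⟨c, hc⟩ := ChordalAux.radius_bound hG hchordal
    have hmp : mp G ≤ gdiam G / 2 + 1 := by
      rw [mp]
      apply csSup_le
      · exact ⟨0, ∅, by intro v r hr; simp, by simp⟩
      · rintro n ⟨M', hM', rfl⟩
        have heq : M' ∩ gball G c (gdiam G / 2 + 1) = M' := by
          apply Finset.inter_eq_left.mpr
          intro m _
          rw [gball, Finset.mem_filter]
          exact ⟨Finset.mem_univ m, hc m⟩
        have := hM' c (gdiam G / 2 + 1) (by omega)
        rwa [heq] at this
    rw [hcardM, ← hdiam] at *
    omega
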